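/- Let μ > 0 and suppose for some measure space setting that for all ξ ∈ ℝⁿ and t ∈ [-1,1], ∫_{ℝⁿ} e^{2a(t)|x|² - 2|ξ|²b(t)(1 - a(t)b(t)) + 4a(t)b(t)x·ξ} |u(x,t)|² dx ≤ C², where a, b : [-1,1] → (0,∞) are continuous, 1 - a(t)b(t) > 0 on [-1,1], and u(·,t) ∈ L²(ℝⁿ). Then for each ε > 0 and t ∈ [-1,1], ‖e^{a_ε(t)|x|²} u(·,t)‖_{L²(ℝⁿ)} ≤ (1 + 1/ε)^{n/4} C, where a_ε(t) = (1+ε)a(t)/(1+ε - a(t)b(t)). -/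

import Mathlib

open Set MeasureTheory
open Real

lemma gkey {α : ℝ} (hα : 0 < α) (β : ℝ) (x : ℝ) :
    -α * x ^ 2 + β * x = -α * (x - β/(2*α))^2 + β^2/(4*α) := by
  field_simp; ring

lemma gauss_integrable {α : ℝ} (hα : 0 < α) (β : ℝ) :
    Integrable (fun x : ℝ => Real.exp (-α * x ^ 2 + β * x)) := by
  simp_rw [gkey hα β, Real.exp_add]
  exact ((integrable_exp_neg_mul_sq hα).comp_sub_right (β/(2*α))).mul_const _

lemma gauss_integral {α : ℝ} (hα : 0 < α) (β : ℝ) :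
    ∫ x : ℝ, Real.exp (-α * x ^ 2 + β * x) = Real.sqrt (π / α) * Real.exp (β^2/(4*α)) := by
  simp_rw [gkey hα β, Real.exp_add]
  rw [integral_mul_const, integral_sub_right_eq_self (fun x => Real.exp (-α * x^2)) (β/(2*α)),
    integral_gaussian]

lemma gauss_lintegral_pi (n : ℕ) {α : ℝ} (hα : 0 < α) (β : Fin n → ℝ) :
    ∫⁻ ξ : Fin n → ℝ, ENNReal.ofReal (Real.exp (-α * (∑ i, (ξ i)^2) + ∑ i, β i * ξ i))
      = ENNReal.ofReal (Real.sqrt (π / α) ^ n * Real.exp (∑ i, (β i)^2/(4*α))) := by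
  have h1 : ∀ ξ : Fin n → ℝ, Real.exp (-α * (∑ i, (ξ i)^2) + ∑ i, β i * ξ i)
      = ∏ i, Real.exp (-α * (ξ i)^2 + β i * ξ i) := by
    intro ξ
    rw [← Real.exp_sum]
    congr 1
    rw [Finset.sum_add_distrib, Finset.mul_sum]
  simp_rw [h1]
  have hint : Integrable (fun ξ : Fin n → ℝ => ∏ i, Real.exp (-α * (ξ i)^2 + β i * ξ i)) :=
    Integrable.fin_nat_prod (𝕜 := ℝ) (fun i => gauss_integrable hα (β i))
  rw [← ofReal_integral_eq_lintegral_ofReal hint (Filter.Eventually.of_forall fun ξ =>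
    Finset.prod_nonneg fun i _ => (Real.exp_pos _).le)]
  rw [volume_pi, integral_fin_nat_prod_eq_prod (𝕜 := ℝ) (fun i (x : ℝ) => Real.exp (-α * x^2 + β i * x))]
  congr 1
  simp_rw [fun i => gauss_integral hα (β i)]
  rw [Finset.prod_mul_distrib, Finset.prod_const, Real.exp_sum, Finset.card_univ, Fintype.card_fin]


/-- Gaussian-shift improvement: if
`∫ e^{2a(t)|x|² - 2|ξ|²b(t)(1 - a(t)b(t)) + 4a(t)b(t)x·ξ} |u(x,t)|² dx ≤ C²` for all `ξ ∈ ℝⁿ`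
and `t ∈ [-1,1]`, with `0 < 1 - a b`, then for every `ε > 0`,
`‖e^{a_ε(t)|x|²} u(·,t)‖² ≤ (1 + 1/ε)^{n/2} C²` where `a_ε = (1+ε)a/(1+ε - ab)`. -/
theorem stmt18 (n : ℕ) (C : ℝ) (hC : 0 ≤ C) (a b : ℝ → ℝ)
    (hacont : Continuous a) (hbcont : Continuous b)
    (hapos : ∀ t ∈ Icc (-1 : ℝ) 1, 0 < a t) (hbpos : ∀ t ∈ Icc (-1 : ℝ) 1, 0 < b t)
    (hab : ∀ t ∈ Icc (-1 : ℝ) 1, 0 < 1 - a t * b t)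
    (u : (Fin n → ℝ) → ℝ → ℂ)
    (hmeas : ∀ t : ℝ, Measurable fun x => u x t)
    (hL2 : ∀ t ∈ Icc (-1 : ℝ) 1, MemLp (fun x => u x t) 2 volume)
    (hyp : ∀ (ξ : Fin n → ℝ), ∀ t ∈ Icc (-1 : ℝ) 1,
      (∫⁻ x : Fin n → ℝ, ENNReal.ofReal
        (Real.exp (2 * a t * (∑ i, (x i) ^ 2) -
            2 * (∑ i, (ξ i) ^ 2) * b t * (1 - a t * b t) +
            4 * a t * b t * (∑ i, x i * ξ i)) * ‖u x t‖ ^ 2)) ≤ ENNReal.ofReal (C ^ 2)) :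
    ∀ ε > (0 : ℝ), ∀ t ∈ Icc (-1 : ℝ) 1,
      (∫⁻ x : Fin n → ℝ, ENNReal.ofReal
        (Real.exp (2 * ((1 + ε) * a t / (1 + ε - a t * b t)) * (∑ i, (x i) ^ 2)) *
          ‖u x t‖ ^ 2)) ≤
      ENNReal.ofReal ((1 + 1 / ε) ^ ((n : ℝ) / 2) * C ^ 2) := by
  intro ε hε t ht
  have hA : 0 < a t := hapos t ht
  have hB : 0 < b t := hbpos t ht
  have h1 : 0 < 1 - a t * b t := hab t ht
  have hD : 0 < 1 + ε - a t * b t := by linarith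
  have hα : 0 < 2 * b t * (1 + ε - a t * b t) := by positivity
  have hγ : 0 < 2 * ε * b t := by positivity
  have hum : Measurable fun x : Fin n → ℝ => u x t := hmeas t
  have hmu2 : Measurable fun x : Fin n → ℝ => ‖u x t‖ ^ 2 := (hum.norm.pow_const 2)
  -- the double-integral integrand
  set F : (Fin n → ℝ) → (Fin n → ℝ) → ENNReal := fun ξ x =>
    ENNReal.ofReal (Real.exp (-(2 * ε * b t) * ∑ i, (ξ i) ^ 2)) *
      ENNReal.ofReal (Real.exp (2 * a t * (∑ i, (x i) ^ 2) -
        2 * (∑ i, (ξ i) ^ 2) * b t * (1 - a t * b t) +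
        4 * a t * b t * (∑ i, x i * ξ i)) * ‖u x t‖ ^ 2) with hF
  have hmf : ∀ ξ : Fin n → ℝ, Measurable fun x : Fin n → ℝ =>
      ENNReal.ofReal (Real.exp (2 * a t * (∑ i, (x i) ^ 2) -
        2 * (∑ i, (ξ i) ^ 2) * b t * (1 - a t * b t) +
        4 * a t * b t * (∑ i, x i * ξ i)) * ‖u x t‖ ^ 2) := by
    intro ξ
    apply Measurable.ennreal_ofReal
    apply Measurable.mul _ hmu2
    apply Continuous.measurable
    fun_prop
  -- Step A
  have stepA : ∀ ξ : Fin n → ℝ, ∫⁻ x, F ξ x ≤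
      ENNReal.ofReal (Real.exp (-(2 * ε * b t) * ∑ i, (ξ i) ^ 2)) * ENNReal.ofReal (C ^ 2) := by
    intro ξ
    simp only [hF]
    rw [lintegral_const_mul _ (hmf ξ)]
    exact mul_le_mul_right (hyp ξ t ht) _
  -- Gaussian integral of the weight
  have hgauss0 : ∫⁻ ξ : Fin n → ℝ, ENNReal.ofReal (Real.exp (-(2 * ε * b t) * ∑ i, (ξ i) ^ 2))
      = ENNReal.ofReal (Real.sqrt (π / (2 * ε * b t)) ^ n) := by
    have h := gauss_lintegral_pi n hγ (fun _ => (0:ℝ))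
    simpa using h
  -- Tonelli swap
  have hFm : Measurable fun p : (Fin n → ℝ) × (Fin n → ℝ) => F p.1 p.2 := by
    simp only [hF]
    apply Measurable.fun_mul
    · apply Measurable.ennreal_ofReal
      apply Continuous.measurable
      fun_prop
    · apply Measurable.ennreal_ofReal
      apply Measurable.mul
      · apply Continuous.measurable
        fun_prop
      · exact hmu2.comp measurable_snd
  have hswap : ∫⁻ ξ, ∫⁻ x, F ξ x = ∫⁻ x, ∫⁻ ξ, F ξ x :=
    lintegral_lintegral_swap hFm.aemeasurable
  -- Step D : compute the inner ξ-integral for fixed x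
  have stepD : ∀ x : Fin n → ℝ, ∫⁻ ξ, F ξ x
      = ENNReal.ofReal (Real.sqrt (π / (2 * b t * (1 + ε - a t * b t))) ^ n) *
        ENNReal.ofReal (Real.exp (2 * ((1 + ε) * a t / (1 + ε - a t * b t)) * (∑ i, (x i) ^ 2)) *
          ‖u x t‖ ^ 2) := by
    intro x
    have hpt : ∀ ξ : Fin n → ℝ, F ξ x
        = ENNReal.ofReal (Real.exp (2 * a t * (∑ i, (x i) ^ 2)) * ‖u x t‖ ^ 2) *
          ENNReal.ofReal (Real.exp (-(2 * b t * (1 + ε - a t * b t)) * (∑ i, (ξ i) ^ 2)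
            + ∑ i, (4 * a t * b t * x i) * ξ i)) := by
      intro ξ
      simp only [hF]
      rw [← ENNReal.ofReal_mul (Real.exp_pos _).le, ← ENNReal.ofReal_mul (by positivity)]
      congr 1
      have hsum : ∑ i, (4 * a t * b t * x i) * ξ i = 4 * a t * b t * ∑ i, x i * ξ i := by
        rw [Finset.mul_sum]; exact Finset.sum_congr rfl fun i _ => by ring
      rw [hsum]
      have key : Real.exp (-(2 * ε * b t) * ∑ i, (ξ i) ^ 2) *
          Real.exp (2 * a t * (∑ i, (x i) ^ 2) -
            2 * (∑ i, (ξ i) ^ 2) * b t * (1 - a t * b t) +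
            4 * a t * b t * (∑ i, x i * ξ i))
        = Real.exp (2 * a t * (∑ i, (x i) ^ 2)) *
          Real.exp (-(2 * b t * (1 + ε - a t * b t)) * (∑ i, (ξ i) ^ 2)
            + 4 * a t * b t * (∑ i, x i * ξ i)) := by
        rw [← Real.exp_add, ← Real.exp_add]; congr 1; ring
      rw [← mul_assoc, key]; ring
    simp_rw [hpt]
    rw [lintegral_const_mul _ (by
      apply Measurable.ennreal_ofReal
      apply Continuous.measurable
      fun_prop)]
    rw [gauss_lintegral_pi n hα (fun i => 4 * a t * b t * x i)]
    rw [← ENNReal.ofReal_mul (by positivity), ← ENNReal.ofReal_mul (by positivity)]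
    congr 1
    have hsum2 : ∑ i, (4 * a t * b t * x i) ^ 2 / (4 * (2 * b t * (1 + ε - a t * b t)))
        = (2 * a t ^ 2 * b t / (1 + ε - a t * b t)) * ∑ i, (x i) ^ 2 := by
      rw [Finset.mul_sum]
      refine Finset.sum_congr rfl fun i _ => ?_
      field_simp
      ring
    rw [hsum2]
    have hkey2 : Real.exp (2 * a t * (∑ i, (x i) ^ 2)) *
        Real.exp ((2 * a t ^ 2 * b t / (1 + ε - a t * b t)) * ∑ i, (x i) ^ 2)
        = Real.exp (2 * ((1 + ε) * a t / (1 + ε - a t * b t)) * (∑ i, (x i) ^ 2)) := by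
      rw [← Real.exp_add]; congr 1; field_simp; ring
    rw [← hkey2]; ring
  -- main inequality
  have measT : Measurable fun x : Fin n → ℝ =>
      ENNReal.ofReal (Real.exp (2 * ((1 + ε) * a t / (1 + ε - a t * b t)) * (∑ i, (x i) ^ 2)) *
        ‖u x t‖ ^ 2) := by
    apply Measurable.ennreal_ofReal
    apply Measurable.mul _ hmu2
    apply Continuous.measurable
    fun_prop
  have main : ENNReal.ofReal (Real.sqrt (π / (2 * b t * (1 + ε - a t * b t))) ^ n) *
      (∫⁻ x : Fin n → ℝ, ENNReal.ofReal
        (Real.exp (2 * ((1 + ε) * a t / (1 + ε - a t * b t)) * (∑ i, (x i) ^ 2)) *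
          ‖u x t‖ ^ 2))
      ≤ ENNReal.ofReal (Real.sqrt (π / (2 * ε * b t)) ^ n) * ENNReal.ofReal (C ^ 2) := by
    rw [← lintegral_const_mul _ measT]
    simp_rw [← stepD]
    rw [← hswap]
    calc ∫⁻ ξ, ∫⁻ x, F ξ x
        ≤ ∫⁻ ξ : Fin n → ℝ, ENNReal.ofReal (Real.exp (-(2 * ε * b t) * ∑ i, (ξ i) ^ 2)) *
            ENNReal.ofReal (C ^ 2) := lintegral_mono stepA
      _ = (∫⁻ ξ : Fin n → ℝ, ENNReal.ofReal (Real.exp (-(2 * ε * b t) * ∑ i, (ξ i) ^ 2))) *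
            ENNReal.ofReal (C ^ 2) := lintegral_mul_const _ (by
          apply Measurable.ennreal_ofReal
          apply Continuous.measurable
          fun_prop)
      _ = _ := by rw [hgauss0]
  -- divide by the positive constant
  have hk1 : 0 < Real.sqrt (π / (2 * b t * (1 + ε - a t * b t))) ^ n :=
    pow_pos (Real.sqrt_pos.mpr (by positivity)) n
  have hT : (∫⁻ x : Fin n → ℝ, ENNReal.ofReal
        (Real.exp (2 * ((1 + ε) * a t / (1 + ε - a t * b t)) * (∑ i, (x i) ^ 2)) *
          ‖u x t‖ ^ 2))
      ≤ ENNReal.ofReal ((Real.sqrt (π / (2 * b t * (1 + ε - a t * b t))) ^ n)⁻¹) *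
        (ENNReal.ofReal (Real.sqrt (π / (2 * ε * b t)) ^ n) * ENNReal.ofReal (C ^ 2)) := by
    rw [ENNReal.ofReal_inv_of_pos hk1]
    calc (∫⁻ x : Fin n → ℝ, ENNReal.ofReal
          (Real.exp (2 * ((1 + ε) * a t / (1 + ε - a t * b t)) * (∑ i, (x i) ^ 2)) *
            ‖u x t‖ ^ 2))
        = (ENNReal.ofReal (Real.sqrt (π / (2 * b t * (1 + ε - a t * b t))) ^ n))⁻¹ *
          (ENNReal.ofReal (Real.sqrt (π / (2 * b t * (1 + ε - a t * b t))) ^ n) *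
          (∫⁻ x : Fin n → ℝ, ENNReal.ofReal
            (Real.exp (2 * ((1 + ε) * a t / (1 + ε - a t * b t)) * (∑ i, (x i) ^ 2)) *
              ‖u x t‖ ^ 2))) := by
          rw [← mul_assoc, ENNReal.inv_mul_cancel (ENNReal.ofReal_pos.mpr hk1).ne'
            ENNReal.ofReal_ne_top, one_mul]
      _ ≤ _ := mul_le_mul_right main _
  refine hT.trans ?_
  rw [← ENNReal.ofReal_mul (by positivity), ← ENNReal.ofReal_mul (by positivity)]
  apply ENNReal.ofReal_le_ofReal
  -- remaining real-number inequality
  have hratio : (Real.sqrt (π / (2 * b t * (1 + ε - a t * b t))) ^ n)⁻¹ *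
      Real.sqrt (π / (2 * ε * b t)) ^ n ≤ (1 + 1 / ε) ^ ((n : ℝ) / 2) := by
    have e1 : (Real.sqrt (π / (2 * b t * (1 + ε - a t * b t))) ^ n)⁻¹ *
        Real.sqrt (π / (2 * ε * b t)) ^ n
        = (Real.sqrt (π / (2 * ε * b t)) /
            Real.sqrt (π / (2 * b t * (1 + ε - a t * b t)))) ^ n := by
      rw [inv_mul_eq_div, ← div_pow]
    rw [e1, ← Real.sqrt_div (by positivity)]
    have harg : (π / (2 * ε * b t)) / (π / (2 * b t * (1 + ε - a t * b t)))
        = (1 + ε - a t * b t) / ε := by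
      field_simp
    rw [harg]
    have hpow : Real.sqrt ((1 + ε - a t * b t) / ε) ^ n
        = ((1 + ε - a t * b t) / ε) ^ ((n : ℝ) / 2) := by
      rw [Real.sqrt_eq_rpow, ← Real.rpow_natCast (((1 + ε - a t * b t) / ε) ^ ((1:ℝ)/2)) n,
        ← Real.rpow_mul (by positivity)]
      congr 1
      ring
    rw [hpow]
    apply Real.rpow_le_rpow (by positivity) _ (by positivity)
    have h2 : (1 : ℝ) + 1 / ε = (ε + 1) / ε := by field_simp
    rw [h2, div_le_div_iff_of_pos_right hε]
    nlinarith [mul_pos hA hB]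
  calc (Real.sqrt (π / (2 * b t * (1 + ε - a t * b t))) ^ n)⁻¹ *
      (Real.sqrt (π / (2 * ε * b t)) ^ n * C ^ 2)
      = ((Real.sqrt (π / (2 * b t * (1 + ε - a t * b t))) ^ n)⁻¹ *
        Real.sqrt (π / (2 * ε * b t)) ^ n) * C ^ 2 := by ring
    _ ≤ (1 + 1 / ε) ^ ((n : ℝ) / 2) * C ^ 2 :=
        mul_le_mul_of_nonneg_right hratio (by positivity)
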